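/- arXiv:2205.11358 — 5 statements merged into one kernel-verified Lean document; each statement's English description precedes it below -/
import Mathlib

section
/- Let m be a linear model m(x) = c + gᵀx and f have L-Lipschitz gradient on an open convex set containing B̄(y⁰,δ). Suppose |m(yʲ) - f(yʲ)| ≤ κδ² for sample points y⁰, y¹, …, yⁿ ∈ B̄(y⁰,δ), and suppose the n×n matrix L with rows (yⁱ - y⁰)ᵀ is invertible with ‖(L/δ)⁻¹‖ ≤ κ_L. Then for all x ∈ B̄(y⁰,δ): ‖∇f(x) - g‖ ≤ (L + (L/2 + 2κ) κ_L √n) δ. -/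
open Metric Matrix intervalIntegral

/-- Euclidean operator norm of a matrix. -/
noncomputable def opNorm {m n : Type*} [Fintype m] [Fintype n] [DecidableEq n]
    (A : Matrix m n ℝ) : ℝ :=
  ‖LinearMap.toContinuousLinearMap
    (Matrix.toEuclideanLin A : EuclideanSpace ℝ n →ₗ[ℝ] EuclideanSpace ℝ m)‖

lemma taylor_aux {n : ℕ} {f : EuclideanSpace ℝ (Fin n) → ℝ}
    {f' : EuclideanSpace ℝ (Fin n) → EuclideanSpace ℝ (Fin n)}
    {s : Set (EuclideanSpace ℝ (Fin n))} {L : ℝ}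
    (hdiff : ∀ x ∈ s, HasGradientAt f (f' x) x)
    (hlip : ∀ x ∈ s, ∀ z ∈ s, ‖f' x - f' z‖ ≤ L * ‖x - z‖)
    (a b : EuclideanSpace ℝ (Fin n))
    (hL : 0 ≤ L) (hseg : ∀ t ∈ Set.Icc (0:ℝ) 1, a + t • (b - a) ∈ s) :
    |f b - f a - (inner ℝ (f' a) (b - a) : ℝ)| ≤ L / 2 * ‖b - a‖ ^ 2 := by
  set p : ℝ → EuclideanSpace ℝ (Fin n) := fun t => a + t • (b - a) with hp
  have hp0 : p 0 = a := by simp [hp]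
  have hp1 : p 1 = b := by simp [hp]
  have hpderiv : ∀ t : ℝ, HasDerivAt p (b - a) t := by
    intro t
    simpa [hp] using ((hasDerivAt_id t).smul_const (b - a)).const_add a
  have hpc : Continuous p := by
    have : ∀ t, HasDerivAt p (b - a) t := hpderiv
    exact continuous_const.add (continuous_id.smul continuous_const)
  have hf'c : ContinuousOn f' s := by
    refine (LipschitzOnWith.of_dist_le' (K := L) ?_).continuousOn
    intro x hx z hz
    simpa [dist_eq_norm] using hlip x hx z hz
  set φ' : ℝ → ℝ := fun t => (inner ℝ (f' (p t)) (b - a) : ℝ) with hφ'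
  have ha : a ∈ s := by simpa [hp0] using hseg 0 (by norm_num)
  have hmem : ∀ t ∈ Set.Icc (0:ℝ) 1, p t ∈ s := hseg
  have hφderiv : ∀ t ∈ Set.uIcc (0:ℝ) 1, HasDerivAt (fun t => f (p t)) (φ' t) t := by
    intro t ht
    rw [Set.uIcc_of_le zero_le_one] at ht
    have hx := (hdiff _ (hmem t ht)).hasFDerivAt
    have := hx.comp_hasDerivAt t (hpderiv t)
    simp [hφ'] at this
    exact this
  have hφ'cont : ContinuousOn φ' (Set.uIcc (0:ℝ) 1) := by
    rw [Set.uIcc_of_le zero_le_one]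
    exact ((hf'c.comp hpc.continuousOn hmem).inner continuousOn_const)
  have hφ'int : IntervalIntegrable φ' MeasureTheory.volume 0 1 :=
    hφ'cont.intervalIntegrable
  have key : ∫ t in (0:ℝ)..1, φ' t = f b - f a := by
    have := integral_eq_sub_of_hasDerivAt hφderiv hφ'int
    simpa [hp0, hp1] using this
  set C : ℝ := (inner ℝ (f' a) (b - a) : ℝ) with hC
  have hsub : f b - f a - C = ∫ t in (0:ℝ)..1, (φ' t - C) := by
    rw [intervalIntegral.integral_sub hφ'int intervalIntegrable_const, key,
      intervalIntegral.integral_const]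
    simp
  have hbound : ∀ t ∈ Set.Ioc (0:ℝ) 1, ‖φ' t - C‖ ≤ L * ‖b - a‖ ^ 2 * t := by
    intro t ht
    have hts : p t ∈ s := hmem t ⟨le_of_lt ht.1, ht.2⟩
    have h1 : φ' t - C = (inner ℝ (f' (p t) - f' a) (b - a) : ℝ) := by
      simp [hφ', hC, inner_sub_left]
    rw [h1, Real.norm_eq_abs]
    calc |(inner ℝ (f' (p t) - f' a) (b - a) : ℝ)|
        ≤ ‖f' (p t) - f' a‖ * ‖b - a‖ := abs_real_inner_le_norm _ _
      _ ≤ (L * ‖p t - a‖) * ‖b - a‖ := by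
          exact mul_le_mul_of_nonneg_right (hlip _ hts _ ha) (norm_nonneg _)
      _ = L * ‖b - a‖ ^ 2 * t := by
          have : p t - a = t • (b - a) := by simp [hp]
          rw [this, norm_smul, Real.norm_eq_abs, abs_of_pos ht.1]
          ring
  have habs : |∫ t in (0:ℝ)..1, (φ' t - C)| ≤ |∫ t in (0:ℝ)..1, L * ‖b - a‖ ^ 2 * t| := by
    rw [← Real.norm_eq_abs]
    refine intervalIntegral.norm_integral_le_abs_of_norm_le ?_ ?_
    · filter_upwards [MeasureTheory.ae_restrict_mem measurableSet_Ioc] with t ht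
      exact hbound t (by simpa [Set.uIoc_of_le zero_le_one] using ht)
    · exact Continuous.intervalIntegrable (by continuity : Continuous fun t : ℝ => L * ‖b - a‖ ^ 2 * t) 0 1
  have hval : ∫ t in (0:ℝ)..1, L * ‖b - a‖ ^ 2 * t = L / 2 * ‖b - a‖ ^ 2 := by
    rw [intervalIntegral.integral_const_mul]
    simp [integral_id]
    ring
  rw [hsub]
  refine habs.trans ?_
  rw [hval, abs_of_nonneg (by positivity)]

lemma matrix_aux (n : ℕ) (A : Matrix (Fin n) (Fin n) ℝ) (v : EuclideanSpace ℝ (Fin n))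
    (hdet : IsUnit A.det) (δ : ℝ) (hδ : 0 < δ) (κL E : ℝ) (hE : 0 ≤ E)
    (hAinv : opNorm ((δ⁻¹ • A)⁻¹) ≤ κL)
    (hrow : ∀ i : Fin n, |∑ j, A i j * v j| ≤ E) :
    ‖v‖ ≤ κL * (δ⁻¹ * (Real.sqrt n * E)) := by
  set B := δ⁻¹ • A with hB
  have hBdet : IsUnit B.det := by
    rw [hB, Matrix.det_smul]
    simpa using (IsUnit.pow (Fintype.card (Fin n)) (isUnit_iff_ne_zero.2 (inv_ne_zero hδ.ne'))).mul hdet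
  set v' : Fin n → ℝ := (WithLp.equiv 2 (Fin n → ℝ)) v with hv'
  set w : EuclideanSpace ℝ (Fin n) := (WithLp.equiv 2 (Fin n → ℝ)).symm (A.mulVec v') with hw
  have hnormw : ‖w‖ ≤ Real.sqrt n * E := by
    rw [EuclideanSpace.norm_eq]
    have : ∑ i, ‖((WithLp.equiv 2 (Fin n → ℝ)).symm (A.mulVec v')) i‖ ^ 2 ≤ n * E ^ 2 := by
      calc ∑ i, ‖((WithLp.equiv 2 (Fin n → ℝ)).symm (A.mulVec v')) i‖ ^ 2
          ≤ ∑ _i : Fin n, E ^ 2 := by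
            refine Finset.sum_le_sum fun i _ => ?_
            have h1 : ((WithLp.equiv 2 (Fin n → ℝ)).symm (A.mulVec v')) i = ∑ j, A i j * v j := by
              simp [Matrix.mulVec, dotProduct, hv']
            rw [h1, Real.norm_eq_abs, sq_abs]
            have := hrow i
            nlinarith [abs_nonneg (∑ j, A i j * v j), sq_abs (∑ j, A i j * v j)]
        _ = n * E ^ 2 := by simp [mul_comm]
    calc Real.sqrt (∑ i, ‖((WithLp.equiv 2 (Fin n → ℝ)).symm (A.mulVec v')) i‖ ^ 2)
        ≤ Real.sqrt (n * E ^ 2) := Real.sqrt_le_sqrt this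
      _ = Real.sqrt n * E := by
          rw [Real.sqrt_mul (Nat.cast_nonneg n), Real.sqrt_sq hE]
  have hvid : v = Matrix.toEuclideanLin B⁻¹ ((WithLp.equiv 2 (Fin n → ℝ)).symm (B.mulVec v')) := by
    rw [WithLp.equiv_symm_apply, Matrix.toEuclideanLin_apply_piLp_toLp, Matrix.mulVec_mulVec,
      Matrix.nonsing_inv_mul B hBdet, Matrix.one_mulVec]
    rfl
  have hκL0 : 0 ≤ κL := le_trans (norm_nonneg _) hAinv
  have hBw : (WithLp.equiv 2 (Fin n → ℝ)).symm (B.mulVec v') = δ⁻¹ • w := by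
    rw [hw, hB, Matrix.smul_mulVec]
    rfl
  calc ‖v‖ = ‖(LinearMap.toContinuousLinearMap
        (Matrix.toEuclideanLin B⁻¹ : EuclideanSpace ℝ (Fin n) →ₗ[ℝ] EuclideanSpace ℝ (Fin n)))
        ((WithLp.equiv 2 (Fin n → ℝ)).symm (B.mulVec v'))‖ := by
        rw [LinearMap.coe_toContinuousLinearMap', ← hvid]
    _ ≤ opNorm B⁻¹ * ‖(WithLp.equiv 2 (Fin n → ℝ)).symm (B.mulVec v')‖ :=
        ContinuousLinearMap.le_opNorm _ _
    _ ≤ κL * ‖(WithLp.equiv 2 (Fin n → ℝ)).symm (B.mulVec v')‖ :=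
        mul_le_mul_of_nonneg_right hAinv (norm_nonneg _)
    _ = κL * (δ⁻¹ * ‖w‖) := by
        rw [hBw, norm_smul, Real.norm_eq_abs, abs_of_pos (inv_pos.2 hδ)]
    _ ≤ κL * (δ⁻¹ * (Real.sqrt n * E)) := by
        have := mul_le_mul_of_nonneg_left hnormw (le_of_lt (inv_pos.2 hδ))
        exact mul_le_mul_of_nonneg_left this hκL0

/-- Gradient error bound for a relaxed linear interpolation model: if `m(x) = c + ⟨g,x⟩`,
`f` has `L`-Lipschitz gradient on an open convex set containing `B̄(y⁰,δ)`,
`|m(yʲ) - f(yʲ)| ≤ κ δ²` for `y⁰,…,yⁿ ∈ B̄(y⁰,δ)`, and the matrix `A` with rows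
`(yⁱ - y⁰)ᵀ` is invertible with `‖(A/δ)⁻¹‖ ≤ κ_L`, then on `B̄(y⁰,δ)`:
`‖∇f(x) - g‖ ≤ (L + (L/2 + 2κ) κ_L √n) δ`. -/
theorem stmt_14 (n : ℕ) (f : EuclideanSpace ℝ (Fin n) → ℝ)
    (f' : EuclideanSpace ℝ (Fin n) → EuclideanSpace ℝ (Fin n))
    (s : Set (EuclideanSpace ℝ (Fin n))) (hs : Convex ℝ s) (hso : IsOpen s)
    (δ L κ κL : ℝ) (hδ : 0 < δ) (hL : 0 ≤ L) (hκ : 0 ≤ κ)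
    (y : Fin (n + 1) → EuclideanSpace ℝ (Fin n))
    (hball : closedBall (y 0) δ ⊆ s)
    (hy : ∀ j, y j ∈ closedBall (y 0) δ)
    (hdiff : ∀ x ∈ s, HasGradientAt f (f' x) x)
    (hlip : ∀ x ∈ s, ∀ z ∈ s, ‖f' x - f' z‖ ≤ L * ‖x - z‖)
    (c : ℝ) (g : EuclideanSpace ℝ (Fin n))
    (m : EuclideanSpace ℝ (Fin n) → ℝ)
    (hm : ∀ x, m x = c + (inner ℝ g x : ℝ))
    (hint : ∀ j, |m (y j) - f (y j)| ≤ κ * δ ^ 2)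
    (A : Matrix (Fin n) (Fin n) ℝ)
    (hA : A = Matrix.of fun (i : Fin n) (j : Fin n) => (y i.succ - y 0) j)
    (hdet : IsUnit A.det)
    (hAinv : opNorm ((δ⁻¹ • A)⁻¹) ≤ κL) :
    ∀ x ∈ closedBall (y 0) δ,
      ‖f' x - g‖ ≤ (L + (L / 2 + 2 * κ) * κL * Real.sqrt n) * δ := by
  intro x hx
  have hy0s : y 0 ∈ s := hball (hy 0)
  set v : EuclideanSpace ℝ (Fin n) := g - f' (y 0) with hv
  have hrow : ∀ i : Fin n, |∑ j, A i j * v j| ≤ (L / 2 + 2 * κ) * δ ^ 2 := by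
    intro i
    set b := y i.succ with hb
    have hbball : b ∈ closedBall (y 0) δ := hy i.succ
    have hnb : ‖b - y 0‖ ≤ δ := by rwa [mem_closedBall, dist_eq_norm] at hbball
    have hseg : ∀ t ∈ Set.Icc (0:ℝ) 1, y 0 + t • (b - y 0) ∈ s := by
      intro t ht
      apply hball
      rw [mem_closedBall, dist_eq_norm]
      have h1 : y 0 + t • (b - y 0) - y 0 = t • (b - y 0) := by abel
      rw [h1, norm_smul, Real.norm_eq_abs, abs_of_nonneg ht.1]
      calc t * ‖b - y 0‖ ≤ 1 * δ :=
            mul_le_mul ht.2 hnb (norm_nonneg _) zero_le_one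
        _ = δ := one_mul δ
    have htay := taylor_aux hdiff hlip (y 0) b hL hseg
    have htay2 : |f b - f (y 0) - (inner ℝ (f' (y 0)) (b - y 0) : ℝ)| ≤ L / 2 * δ ^ 2 := by
      refine htay.trans ?_
      have h2 : ‖b - y 0‖ ^ 2 ≤ δ ^ 2 := pow_le_pow_left₀ (norm_nonneg _) hnb 2
      nlinarith
    have hsum : (∑ j, A i j * v j)
        = (inner ℝ g (b - y 0) : ℝ) - (inner ℝ (f' (y 0)) (b - y 0) : ℝ) := by
      rw [← inner_sub_left, hA]
      simp only [Matrix.of_apply, PiLp.inner_apply, RCLike.inner_apply, conj_trivial, hv]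
      exact Finset.sum_congr rfl fun j _ => rfl
    have hmodel : (inner ℝ g (b - y 0) : ℝ) = m b - m (y 0) := by
      rw [hm b, hm (y 0), inner_sub_right]
      ring
    have hint1 := hint i.succ
    have hint0 := hint 0
    rw [← hb] at hint1
    rw [hsum, hmodel]
    have h3 : m b - m (y 0) - (inner ℝ (f' (y 0)) (b - y 0) : ℝ)
        = (m b - f b) - (m (y 0) - f (y 0))
          + (f b - f (y 0) - (inner ℝ (f' (y 0)) (b - y 0) : ℝ)) := by ring
    rw [h3]
    calc |(m b - f b) - (m (y 0) - f (y 0))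
          + (f b - f (y 0) - (inner ℝ (f' (y 0)) (b - y 0) : ℝ))|
        ≤ |(m b - f b) - (m (y 0) - f (y 0))|
          + |f b - f (y 0) - (inner ℝ (f' (y 0)) (b - y 0) : ℝ)| := abs_add_le _ _
      _ ≤ (|m b - f b| + |m (y 0) - f (y 0)|)
          + |f b - f (y 0) - (inner ℝ (f' (y 0)) (b - y 0) : ℝ)| := by
          have := abs_sub (m b - f b) (m (y 0) - f (y 0))
          linarith
      _ ≤ (κ * δ ^ 2 + κ * δ ^ 2) + L / 2 * δ ^ 2 := by
          have := htay2
          linarith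
      _ = (L / 2 + 2 * κ) * δ ^ 2 := by ring
  have hE : (0:ℝ) ≤ (L / 2 + 2 * κ) * δ ^ 2 := by positivity
  have hvnorm := matrix_aux n A v hdet δ hδ κL ((L / 2 + 2 * κ) * δ ^ 2) hE hAinv hrow
  have hκL0 : (0:ℝ) ≤ κL := le_trans (norm_nonneg _) hAinv
  have hxs : x ∈ s := hball hx
  have hxd : ‖x - y 0‖ ≤ δ := by rwa [mem_closedBall, dist_eq_norm] at hx
  have h4 : ‖f' x - g‖ ≤ ‖f' x - f' (y 0)‖ + ‖v‖ := by
    have : f' x - g = (f' x - f' (y 0)) - v := by rw [hv]; abel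
    rw [this]
    exact norm_sub_le _ _
  have h5 : ‖f' x - f' (y 0)‖ ≤ L * δ :=
    (hlip x hxs (y 0) hy0s).trans (mul_le_mul_of_nonneg_left hxd hL)
  have h6 : κL * (δ⁻¹ * (Real.sqrt n * ((L / 2 + 2 * κ) * δ ^ 2)))
      = (L / 2 + 2 * κ) * κL * Real.sqrt n * δ := by
    field_simp
  rw [h6] at hvnorm
  calc ‖f' x - g‖ ≤ L * δ + ‖v‖ := by linarith
    _ ≤ L * δ + (L / 2 + 2 * κ) * κL * Real.sqrt n * δ := by linarith
    _ = (L + (L / 2 + 2 * κ) * κL * Real.sqrt n) * δ := by ring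
end

section
/- Let f have L-Lipschitz gradient on an open convex set containing B̄(y⁰,δ), and let m be a quadratic model with gradient ∇m and Hessian bounded by κ_H that satisfies the gradient error bound ‖∇f(x) - ∇m(x)‖ ≤ Gδ for all x ∈ B̄(y⁰,δ) and the relaxed interpolation condition |m(y⁰) - f(y⁰)| ≤ κδ². Then for all x ∈ B̄(y⁰,δ): |f(x) - m(x)| ≤ ( (L + κ_H)/2 + κ + G ) δ². -/
set_option maxHeartbeats 1000000


open Metric

/-- If `f` has `L`-Lipschitz gradient on an open convex set containing `B̄(y⁰,δ)`, and
the quadratic model `m` has gradient `m'` which is `κ_H`-Lipschitz (Hessian bounded by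
`κ_H`), with gradient error `‖∇f(x) - ∇m(x)‖ ≤ G δ` on the ball and
`|m(y⁰) - f(y⁰)| ≤ κ δ²`, then on `B̄(y⁰,δ)`:
`|f(x) - m(x)| ≤ ((L + κ_H)/2 + κ + G) δ²`. -/
theorem stmt_15 (n : ℕ) (f m : EuclideanSpace ℝ (Fin n) → ℝ)
    (f' m' : EuclideanSpace ℝ (Fin n) → EuclideanSpace ℝ (Fin n))
    (s : Set (EuclideanSpace ℝ (Fin n))) (hs : Convex ℝ s) (hso : IsOpen s)
    (y0 : EuclideanSpace ℝ (Fin n)) (δ L κ κH G : ℝ)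
    (hδ : 0 < δ) (hL : 0 ≤ L) (hκ : 0 ≤ κ) (hκH : 0 ≤ κH) (hG : 0 ≤ G)
    (hball : closedBall y0 δ ⊆ s)
    (hdiff : ∀ x ∈ s, HasGradientAt f (f' x) x)
    (hmdiff : ∀ x ∈ s, HasGradientAt m (m' x) x)
    (hlip : ∀ x ∈ s, ∀ z ∈ s, ‖f' x - f' z‖ ≤ L * ‖x - z‖)
    (hmlip : ∀ x ∈ s, ∀ z ∈ s, ‖m' x - m' z‖ ≤ κH * ‖x - z‖)
    (hgrad : ∀ x ∈ closedBall y0 δ, ‖f' x - m' x‖ ≤ G * δ)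
    (hint : |m y0 - f y0| ≤ κ * δ ^ 2) :
    ∀ x ∈ closedBall y0 δ,
      |f x - m x| ≤ ((L + κH) / 2 + κ + G) * δ ^ 2 := by
  intro x hx
  set e : EuclideanSpace ℝ (Fin n) → ℝ := fun z => f z - m z with he
  set e' : EuclideanSpace ℝ (Fin n) → EuclideanSpace ℝ (Fin n) := fun z => f' z - m' z with he'
  set M := L + κH with hM
  -- e has gradient e' on s
  have hediff : ∀ z ∈ s, HasGradientAt e (e' z) z := by
    intro z hz
    have h1 := (hdiff z hz).hasFDerivAt.sub (hmdiff z hz).hasFDerivAt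
    have h2 : HasFDerivAt e (InnerProductSpace.toDual ℝ (EuclideanSpace ℝ (Fin n)) (e' z)) z := by
      rw [he', map_sub]
      exact h1
    exact hasGradientAt_iff_hasFDerivAt.mpr h2
  -- e' is M-Lipschitz on s
  have helip : ∀ z ∈ s, ∀ w ∈ s, ‖e' z - e' w‖ ≤ M * ‖z - w‖ := by
    intro z hz w hw
    have : e' z - e' w = (f' z - f' w) - (m' z - m' w) := by
      simp [e']; abel
    rw [this, hM, add_mul]
    exact (norm_sub_le _ _).trans (add_le_add (hlip z hz w hw) (hmlip z hz w hw))
  set v := x - y0 with hv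
  have hvδ : ‖v‖ ≤ δ := by
    simpa [v, dist_eq_norm] using hx
  -- points on the segment are in the ball
  set γ : ℝ → EuclideanSpace ℝ (Fin n) := fun t => y0 + t • v with hγ
  have hγball : ∀ t ∈ Set.Icc (0:ℝ) 1, γ t ∈ closedBall y0 δ := by
    intro t ht
    simp only [mem_closedBall, dist_eq_norm, γ]
    have : y0 + t • v - y0 = t • v := by abel
    rw [this, norm_smul]
    calc ‖t‖ * ‖v‖ ≤ 1 * ‖v‖ := by
          apply mul_le_mul_of_nonneg_right _ (norm_nonneg v)
          rw [Real.norm_eq_abs, abs_le]; constructor <;> linarith [ht.1, ht.2]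
      _ ≤ δ := by linarith
  -- derivative of g = e ∘ γ
  have hgderiv : ∀ t ∈ Set.Icc (0:ℝ) 1,
      HasDerivAt (fun t => e (γ t)) (inner ℝ (e' (γ t)) v : ℝ) t := by
    intro t ht
    have hγd : HasDerivAt γ v t := by
      have h1 : HasDerivAt (fun t : ℝ => t • v) ((1:ℝ) • v) t :=
        (hasDerivAt_id t).smul_const v
      simpa [γ, one_smul] using h1.const_add y0
    have hE := (hediff (γ t) (hball (hγball t ht))).hasFDerivAt
    have := hE.comp_hasDerivAt t hγd
    simp [InnerProductSpace.toDual_apply_apply] at this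
    exact this
  -- continuity of the integrand
  have hcont : ContinuousOn (fun t => (inner ℝ (e' (γ t)) v : ℝ)) (Set.Icc 0 1) := by
    have hlipγ : LipschitzOnWith (Real.toNNReal (M * ‖v‖ * ‖v‖))
        (fun t => (inner ℝ (e' (γ t)) v : ℝ)) (Set.Icc 0 1) := by
      apply LipschitzOnWith.of_dist_le'
      intro t ht u hu
      have h1 : dist (inner ℝ (e' (γ t)) v : ℝ) (inner ℝ (e' (γ u)) v) =
          |inner ℝ (e' (γ t) - e' (γ u)) v| := by
        rw [Real.dist_eq, ← inner_sub_left]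
      rw [h1]
      have h2 : |(inner ℝ (e' (γ t) - e' (γ u)) v : ℝ)| ≤ ‖e' (γ t) - e' (γ u)‖ * ‖v‖ :=
        abs_real_inner_le_norm _ _
      have h3 : ‖e' (γ t) - e' (γ u)‖ ≤ M * ‖γ t - γ u‖ :=
        helip _ (hball (hγball t ht)) _ (hball (hγball u hu))
      have h4 : ‖γ t - γ u‖ = |t - u| * ‖v‖ := by
        have : γ t - γ u = (t - u) • v := by simp [γ, sub_smul]
        rw [this, norm_smul, Real.norm_eq_abs]
      have hMnn : 0 ≤ M := by positivity
      calc |(inner ℝ (e' (γ t) - e' (γ u)) v : ℝ)| ≤ ‖e' (γ t) - e' (γ u)‖ * ‖v‖ := h2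
        _ ≤ M * (|t - u| * ‖v‖) * ‖v‖ := by
            apply mul_le_mul_of_nonneg_right _ (norm_nonneg v)
            exact h3.trans (by rw [h4])
        _ = M * ‖v‖ * ‖v‖ * dist t u := by rw [Real.dist_eq]; ring
    exact hlipγ.continuousOn
  have hint1 : IntervalIntegrable (fun t => (inner ℝ (e' (γ t)) v : ℝ))
      MeasureTheory.volume 0 1 := by
    apply ContinuousOn.intervalIntegrable
    rwa [Set.uIcc_of_le (by norm_num : (0:ℝ) ≤ 1)]
  -- fundamental theorem of calculus
  have hftc : e x - e y0 = ∫ t in (0:ℝ)..1, (inner ℝ (e' (γ t)) v : ℝ) := by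
    have := intervalIntegral.integral_eq_sub_of_hasDerivAt
      (f := fun t => e (γ t)) (f' := fun t => (inner ℝ (e' (γ t)) v : ℝ))
      (by intro t ht; exact hgderiv t (by rwa [Set.uIcc_of_le (by norm_num : (0:ℝ) ≤ 1)] at ht))
      hint1
    have hγ0 : γ 0 = y0 := by simp [γ]
    have hγ1 : γ 1 = x := by simp [γ, v]
    rw [this]
    simp only [hγ0, hγ1]
  -- key bound
  have hkey : |e x - e y0 - inner ℝ (e' y0) v| ≤ M / 2 * ‖v‖ ^ 2 := by
    have hconst : (inner ℝ (e' y0) v : ℝ) = ∫ t in (0:ℝ)..1, (inner ℝ (e' y0) v : ℝ) := by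
      simp
    rw [hftc, hconst, ← intervalIntegral.integral_sub hint1 intervalIntegrable_const]
    have hbound : ∀ t ∈ Set.Icc (0:ℝ) 1,
        |(inner ℝ (e' (γ t)) v : ℝ) - inner ℝ (e' y0) v| ≤ M * ‖v‖ ^ 2 * t := by
      intro t ht
      rw [← inner_sub_left]
      have h2 : |(inner ℝ (e' (γ t) - e' y0) v : ℝ)| ≤ ‖e' (γ t) - e' y0‖ * ‖v‖ :=
        abs_real_inner_le_norm _ _
      have h3 : ‖e' (γ t) - e' y0‖ ≤ M * ‖γ t - y0‖ :=
        helip _ (hball (hγball t ht)) _ (hball (mem_closedBall_self hδ.le))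
      have h4 : ‖γ t - y0‖ = t * ‖v‖ := by
        have hg : γ t - y0 = t • v := by simp [γ]
        rw [hg, norm_smul, Real.norm_eq_abs, abs_of_nonneg ht.1]
      calc |(inner ℝ (e' (γ t) - e' y0) v : ℝ)| ≤ ‖e' (γ t) - e' y0‖ * ‖v‖ := h2
        _ ≤ M * (t * ‖v‖) * ‖v‖ := by
            apply mul_le_mul_of_nonneg_right _ (norm_nonneg v)
            exact h3.trans (by rw [h4])
        _ = M * ‖v‖ ^ 2 * t := by ring
    have habs : |∫ t in (0:ℝ)..1, ((inner ℝ (e' (γ t)) v : ℝ) - inner ℝ (e' y0) v)| ≤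
        ∫ t in (0:ℝ)..1, M * ‖v‖ ^ 2 * t := by
      refine (intervalIntegral.abs_integral_le_integral_abs (by norm_num)).trans ?_
      apply intervalIntegral.integral_mono_on (by norm_num)
      · exact (hint1.sub intervalIntegrable_const).abs
      · exact (Continuous.intervalIntegrable (by continuity) 0 1)
      · exact hbound
    have hval : (∫ t in (0:ℝ)..1, M * ‖v‖ ^ 2 * t) = M / 2 * ‖v‖ ^ 2 := by
      rw [intervalIntegral.integral_const_mul, integral_id]
      ring
    exact habs.trans (le_of_eq hval)
  -- assemble
  have h1 : |e y0| ≤ κ * δ ^ 2 := by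
    calc |e y0| = |m y0 - f y0| := abs_sub_comm _ _
      _ ≤ κ * δ ^ 2 := hint
  have h2 : |(inner ℝ (e' y0) v : ℝ)| ≤ G * δ * δ := by
    refine (abs_real_inner_le_norm _ _).trans ?_
    have := hgrad y0 (mem_closedBall_self hδ.le)
    exact mul_le_mul this hvδ (norm_nonneg v) (by positivity)
  have h3 : M / 2 * ‖v‖ ^ 2 ≤ M / 2 * δ ^ 2 := by
    apply mul_le_mul_of_nonneg_left _ (by positivity)
    exact pow_le_pow_left₀ (norm_nonneg v) hvδ 2
  have h4 : |e x| ≤ |e y0| + |(inner ℝ (e' y0) v : ℝ)| + M / 2 * ‖v‖ ^ 2 := by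
    have : e x = (e x - e y0 - inner ℝ (e' y0) v) + e y0 + inner ℝ (e' y0) v := by ring
    rw [this]
    calc |(e x - e y0 - inner ℝ (e' y0) v) + e y0 + inner ℝ (e' y0) v|
        ≤ |(e x - e y0 - inner ℝ (e' y0) v) + e y0| + |(inner ℝ (e' y0) v : ℝ)| := abs_add_le _ _
      _ ≤ |e x - e y0 - inner ℝ (e' y0) v| + |e y0| + |(inner ℝ (e' y0) v : ℝ)| := by
          linarith [abs_add_le (e x - e y0 - (inner ℝ (e' y0) v : ℝ)) (e y0)]
      _ ≤ |e y0| + |(inner ℝ (e' y0) v : ℝ)| + M / 2 * ‖v‖ ^ 2 := by linarith [hkey]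
  have : |f x - m x| = |e x| := rfl
  rw [this]
  calc |e x| ≤ |e y0| + |(inner ℝ (e' y0) v : ℝ)| + M / 2 * ‖v‖ ^ 2 := h4
    _ ≤ κ * δ ^ 2 + G * δ * δ + M / 2 * δ ^ 2 := by linarith
    _ = ((L + κH) / 2 + κ + G) * δ ^ 2 := by rw [hM]; ring
end

section
/- Let ℓ(x) = αᵀφ̄(x) be a quadratic polynomial on ℝⁿ in the natural basis φ̄, with |ℓ(x)| ≤ Λ for all x in the closed unit ball B̄(0,1). Then ‖α‖_∞ ≤ 4Λ, i.e., each coefficient of ℓ in the natural basis is bounded in absolute value by 4Λ. -/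
open Metric

/-- If a quadratic `ℓ(x) = c + gᵀx + ½ xᵀHx` (with `H` symmetric) satisfies `|ℓ(x)| ≤ Λ`
on the closed unit ball, then all of its natural-basis coefficients (`c`, the `gᵢ`, the
`H_ii` as coefficients of `xᵢ²/2`, and the `H_ij` as coefficients of `xᵢxⱼ`) satisfy
`‖α‖_∞ ≤ 4Λ`. -/
theorem stmt_16 (n : ℕ) (c : ℝ) (g : Fin n → ℝ) (H : Matrix (Fin n) (Fin n) ℝ)
    (hH : H.IsSymm) (Λ : ℝ)
    (ℓ : EuclideanSpace ℝ (Fin n) → ℝ)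
    (hℓ : ∀ x, ℓ x = c + (∑ i, g i * x i) + (1 / 2) * ∑ i, ∑ j, x i * H i j * x j)
    (hbound : ∀ x : EuclideanSpace ℝ (Fin n), ‖x‖ ≤ 1 → |ℓ x| ≤ Λ) :
    |c| ≤ 4 * Λ ∧ (∀ i, |g i| ≤ 4 * Λ) ∧ (∀ i j, |H i j| ≤ 4 * Λ) := by
  have h0 : ℓ 0 = c := by rw [hℓ]; simp
  have hc : |c| ≤ Λ := by
    have := hbound 0 (by simp)
    rwa [h0] at this
  have hΛ : 0 ≤ Λ := le_trans (abs_nonneg c) hc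
  have evalS : ∀ (i : Fin n) (a : ℝ),
      ℓ (EuclideanSpace.single i a) = c + g i * a + (1/2) * (a * H i i * a) := by
    intro i a
    rw [hℓ]
    congr 1
    · congr 1
      simp [EuclideanSpace.single_apply, mul_ite, mul_zero]
    · congr 1
      simp [EuclideanSpace.single_apply, mul_ite, ite_mul, mul_zero, zero_mul]
  have normS : ∀ (i : Fin n) (a : ℝ), |a| ≤ 1 → ‖EuclideanSpace.single i a‖ ≤ 1 := by
    intro i a ha
    rw [EuclideanSpace.norm_single]; exact ha
  have eval2 : ∀ (i j : Fin n) (a b : ℝ), i ≠ j →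
      ℓ (EuclideanSpace.single i a + EuclideanSpace.single j b)
        = c + (g i * a + g j * b)
          + (1/2) * (a * H i i * a + a * H i j * b + b * H j i * a + b * H j j * b) := by
    intro i j a b hij
    rw [hℓ]
    have hx : ∀ k, (EuclideanSpace.single i a + EuclideanSpace.single j b) k
        = (if k = i then a else 0) + (if k = j then b else 0) := by
      intro k
      simp [EuclideanSpace.single_apply]
    simp only [hx]
    congr 1
    · congr 1
      rw [show (∑ k, g k * ((if k = i then a else 0) + (if k = j then b else 0)))
          = (∑ k, g k * (if k = i then a else 0)) + (∑ k, g k * (if k = j then b else 0)) by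
        rw [← Finset.sum_add_distrib]; exact Finset.sum_congr rfl fun k _ => by ring]
      simp [mul_ite, mul_zero]
    · congr 1
      have hsum : ∀ (u v : Fin n) (p q : ℝ),
          (∑ k, ∑ l, (if k = u then p else 0) * H k l * (if l = v then q else 0))
            = p * H u v * q := by
        intro u v p q
        simp [mul_ite, ite_mul, mul_zero, zero_mul]
      rw [show (∑ k, ∑ l, ((if k = i then a else 0) + (if k = j then b else 0)) * H k l *
            ((if l = i then a else 0) + (if l = j then b else 0)))
          = (∑ k, ∑ l, (if k = i then a else 0) * H k l * (if l = i then a else 0))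
          + (∑ k, ∑ l, (if k = i then a else 0) * H k l * (if l = j then b else 0))
          + (∑ k, ∑ l, (if k = j then b else 0) * H k l * (if l = i then a else 0))
          + (∑ k, ∑ l, (if k = j then b else 0) * H k l * (if l = j then b else 0)) by
        rw [← Finset.sum_add_distrib, ← Finset.sum_add_distrib, ← Finset.sum_add_distrib]
        refine Finset.sum_congr rfl fun k _ => ?_
        rw [← Finset.sum_add_distrib, ← Finset.sum_add_distrib, ← Finset.sum_add_distrib]
        exact Finset.sum_congr rfl fun l _ => by ring]
      rw [hsum, hsum, hsum, hsum]
  have norm2 : ∀ (i j : Fin n) (a b : ℝ), i ≠ j → a^2 + b^2 ≤ 1 →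
      ‖EuclideanSpace.single i a + EuclideanSpace.single j b‖ ≤ 1 := by
    intro i j a b hij hab
    rw [EuclideanSpace.norm_eq]
    refine le_trans (Real.sqrt_le_sqrt ?_) (le_of_eq Real.sqrt_one)
    have hx : ∀ k, (EuclideanSpace.single i a + EuclideanSpace.single j b) k
        = (if k = i then a else 0) + (if k = j then b else 0) := by
      intro k; simp [EuclideanSpace.single_apply]
    calc (∑ k, ‖(EuclideanSpace.single i a + EuclideanSpace.single j b) k‖^2)
        = ∑ k, ((if k = i then a else 0) + (if k = j then b else 0))^2 := by
          refine Finset.sum_congr rfl fun k _ => ?_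
          rw [hx k, Real.norm_eq_abs, sq_abs]
      _ = a^2 + b^2 := by
          rw [show (fun k => ((if k = i then a else 0) + (if k = j then b else 0))^2)
            = fun k => (if k = i then a^2 else 0) + (if k = j then b^2 else 0) from ?_]
          · rw [Finset.sum_add_distrib]; simp
          · funext k
            by_cases h1 : k = i <;> by_cases h2 : k = j <;> simp_all <;> ring
      _ ≤ 1 := hab
  refine ⟨by linarith, ?_, ?_⟩
  · intro i
    have h1 := hbound _ (normS i 1 (by norm_num))
    have h2 := hbound _ (normS i (-1) (by norm_num))
    rw [evalS i 1] at h1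
    rw [evalS i (-1)] at h2
    rw [show c + g i * 1 + 1 / 2 * (1 * H i i * 1) = c + g i + (1/2) * H i i by ring] at h1
    rw [show c + g i * (-1) + 1 / 2 * (-1 * H i i * (-1)) = c - g i + (1/2) * H i i by ring] at h2
    rw [abs_le] at h1 h2 ⊢
    constructor <;> linarith [abs_le.mp hc]
  · intro i j
    by_cases hij : i = j
    · subst hij
      have h1 := hbound _ (normS i 1 (by norm_num))
      have h2 := hbound _ (normS i (-1) (by norm_num))
      rw [evalS i 1] at h1
      rw [evalS i (-1)] at h2
      rw [show c + g i * 1 + 1 / 2 * (1 * H i i * 1) = c + g i + (1/2) * H i i by ring] at h1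
      rw [show c + g i * (-1) + 1 / 2 * (-1 * H i i * (-1)) = c - g i + (1/2) * H i i by ring] at h2
      rw [abs_le] at h1 h2 ⊢
      have := abs_le.mp hc
      constructor <;> linarith
    · set a : ℝ := (Real.sqrt 2)⁻¹ with ha
      have haa : a * a = 1/2 := by
        have h2 : Real.sqrt 2 * Real.sqrt 2 = 2 := Real.mul_self_sqrt (by norm_num)
        rw [ha, ← mul_inv, h2]
        norm_num
      have hle : a^2 + a^2 ≤ 1 := by rw [sq, haa]; norm_num
      have hle2 : a^2 + (-a)^2 ≤ 1 := by rw [neg_pow]; simpa using hle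
      have hle3 : (-a)^2 + (-a)^2 ≤ 1 := by rw [neg_pow]; simpa [neg_pow] using hle
      have hle4 : (-a)^2 + a^2 ≤ 1 := by rw [neg_pow]; simpa using hle
      have hji : H j i = H i j := by
        conv_lhs => rw [← hH]
        rfl
      have h1 := hbound _ (norm2 i j a a hij hle)
      have h2 := hbound _ (norm2 i j a (-a) hij hle2)
      have h3 := hbound _ (norm2 i j (-a) (-a) hij hle3)
      have h4 := hbound _ (norm2 i j (-a) a hij hle4)
      rw [eval2 i j a a hij, hji] at h1
      rw [eval2 i j a (-a) hij, hji] at h2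
      rw [eval2 i j (-a) (-a) hij, hji] at h3
      rw [eval2 i j (-a) a hij, hji] at h4
      rw [show c + (g i * a + g j * a) + 1 / 2 * (a * H i i * a + a * H i j * a + a * H i j * a + a * H j j * a)
          = c + (g i * a + g j * a) + (1/4) * (H i i + 2 * H i j + H j j) from by
        linear_combination ((1/2) * (H i i + 2 * H i j + H j j)) * haa] at h1
      rw [show c + (g i * a + g j * (-a)) + 1 / 2 * (a * H i i * a + a * H i j * (-a) + -a * H i j * a + -a * H j j * (-a))
          = c + (g i * a - g j * a) + (1/4) * (H i i - 2 * H i j + H j j) from by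
        linear_combination ((1/2) * (H i i - 2 * H i j + H j j)) * haa] at h2
      rw [show c + (g i * (-a) + g j * (-a)) + 1 / 2 * (-a * H i i * (-a) + -a * H i j * (-a) + -a * H i j * (-a) + -a * H j j * (-a))
          = c - (g i * a + g j * a) + (1/4) * (H i i + 2 * H i j + H j j) from by
        linear_combination ((1/2) * (H i i + 2 * H i j + H j j)) * haa] at h3
      rw [show c + (g i * (-a) + g j * a) + 1 / 2 * (-a * H i i * (-a) + -a * H i j * a + a * H i j * (-a) + a * H j j * a)
          = c - (g i * a - g j * a) + (1/4) * (H i i - 2 * H i j + H j j) from by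
        linear_combination ((1/2) * (H i i - 2 * H i j + H j j)) * haa] at h4
      rw [abs_le] at h1 h2 h3 h4 ⊢
      constructor <;> linarith [h1.1, h1.2, h2.1, h2.2, h3.1, h3.2, h4.1, h4.2]
end

section
/- For any coefficient vector v ∈ ℝ^{q+1} with ‖v‖_∞ = 1 defining the quadratic polynomial p(x) = vᵀφ̄(x) on ℝⁿ in the natural basis φ̄, we have max_{x ∈ B̄(0,1)} |p(x)| ≥ 1/4. -/
set_option maxHeartbeats 800000

lemma sum_two (n : ℕ) (i j : Fin n) (a b : ℝ) (f : Fin n → ℝ) :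
    ∑ k, f k * ((if k = i then a else 0) + (if k = j then b else 0)) = f i * a + f j * b := by
  simp [mul_add, mul_ite, Finset.sum_add_distrib, Finset.sum_ite_eq']

lemma sum_two2 (n : ℕ) (i j : Fin n) (a b : ℝ) (H : Matrix (Fin n) (Fin n) ℝ) :
    ∑ k, ∑ l, ((if k = i then a else 0) + (if k = j then b else 0)) * H k l *
      ((if l = i then a else 0) + (if l = j then b else 0)) =
      a * H i i * a + a * H i j * b + b * H j i * a + b * H j j * b := by
  simp [mul_add, add_mul, mul_ite, ite_mul, Finset.sum_add_distrib, Finset.sum_ite_eq',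
    Finset.mul_sum, Finset.sum_ite_eq]
  ring

lemma norm_two (n : ℕ) (i j : Fin n) (hij : i ≠ j) (a b : ℝ) :
    ‖(show EuclideanSpace ℝ (Fin n) from
      WithLp.toLp 2 (fun k => (if k = i then a else 0) + (if k = j then b else 0)))‖ =
      Real.sqrt (a ^ 2 + b ^ 2) := by
  rw [EuclideanSpace.norm_eq]
  congr 1
  have : ∀ k : Fin n, ((if k = i then a else 0) + (if k = j then b else 0) : ℝ) ^ 2
      = (if k = i then a ^ 2 else 0) + (if k = j then b ^ 2 else 0) := by
    intro k
    by_cases h1 : k = i <;> by_cases h2 : k = j <;> simp_all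
  simp only [WithLp.ofLp_toLp, PiLp.toLp_apply, Real.norm_eq_abs, sq_abs, this, Finset.sum_add_distrib, Finset.sum_ite_eq',
    Finset.mem_univ, if_true]

/-- For any coefficient vector with `‖v‖_∞ = 1` (coefficients `c`, `gᵢ`, `H_ij` of the
natural basis `(1, xᵢ, xᵢ²/2, xᵢxⱼ)`, `H` symmetric) defining the quadratic
`p(x) = c + gᵀx + ½ xᵀHx`, we have `max_{‖x‖ ≤ 1} |p(x)| ≥ 1/4`. -/
theorem stmt_17 (n : ℕ) (c : ℝ) (g : Fin n → ℝ) (H : Matrix (Fin n) (Fin n) ℝ)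
    (hH : H.IsSymm)
    (hle : |c| ≤ 1 ∧ (∀ i, |g i| ≤ 1) ∧ (∀ i j, |H i j| ≤ 1))
    (heq : |c| = 1 ∨ (∃ i, |g i| = 1) ∨ (∃ i j, |H i j| = 1))
    (p : EuclideanSpace ℝ (Fin n) → ℝ)
    (hp : ∀ x, p x = c + (∑ i, g i * x i) + (1 / 2) * ∑ i, ∑ j, x i * H i j * x j) :
    ∃ x : EuclideanSpace ℝ (Fin n), ‖x‖ ≤ 1 ∧ 1 / 4 ≤ |p x| := by
  by_contra hcon
  push_neg at hcon
  have h0 : p 0 = c := by simp [hp]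
  have hp0 : |p 0| < 1 / 4 := hcon 0 (by simp)
  set X : Fin n → Fin n → ℝ → ℝ → EuclideanSpace ℝ (Fin n) :=
    fun i j a b => WithLp.toLp 2 (fun k => (if k = i then a else 0) + (if k = j then b else 0)) with hX
  have hval : ∀ i j : Fin n, ∀ a b : ℝ, p (X i j a b) =
      c + (g i * a + g j * b) + (1/2) * (a * H i i * a + a * H i j * b + b * H j i * a
        + b * H j j * b) := by
    intro i j a b
    rw [hp]
    simp only [hX, WithLp.ofLp_toLp]
    rw [show (∑ k, g k * ((if k = i then a else 0) + (if k = j then b else 0))) =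
      g i * a + g j * b from sum_two n i j a b g, sum_two2 n i j a b H]
  have hnorm1 : ∀ (i : Fin n) (a : ℝ), |a| ≤ 1 → ‖X i i a 0‖ ≤ 1 := by
    intro i a ha
    have hsum : ∑ k, ‖((if k = i then a else 0) + (if k = i then 0 else 0) : ℝ)‖ ^ 2 = a ^ 2 := by
      simp [apply_ite, Finset.sum_ite_eq']
    rw [EuclideanSpace.norm_eq, show (∑ k, ‖(X i i a 0) k‖ ^ 2) = a ^ 2 from hsum,
      Real.sqrt_sq_eq_abs]
    exact ha
  rcases heq with hc | ⟨i, hg⟩ | ⟨i, j, hHij⟩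
  · rw [h0] at hp0; linarith
  · have e1 : p (X i i 1 0) = c + g i + (1/2) * H i i := by rw [hval]; ring
    have e2 : p (X i i (-1) 0) = c - g i + (1/2) * H i i := by rw [hval]; ring
    have b1 := abs_lt.mp (hcon _ (hnorm1 i 1 (by norm_num)))
    have b2 := abs_lt.mp (hcon _ (hnorm1 i (-1) (by norm_num)))
    rw [e1] at b1; rw [e2] at b2
    rcases abs_eq (by norm_num : (0:ℝ) ≤ 1) |>.mp hg with h | h <;> linarith [b1.1, b1.2, b2.1, b2.2]
  · by_cases hij : i = j
    · subst hij
      have e1 : p (X i i 1 0) = c + g i + (1/2) * H i i := by rw [hval]; ring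
      have e2 : p (X i i (-1) 0) = c - g i + (1/2) * H i i := by rw [hval]; ring
      have b1 := abs_lt.mp (hcon _ (hnorm1 i 1 (by norm_num)))
      have b2 := abs_lt.mp (hcon _ (hnorm1 i (-1) (by norm_num)))
      rw [e1] at b1; rw [e2] at b2
      rw [h0] at hp0
      have hc := abs_lt.mp hp0
      rcases abs_eq (by norm_num : (0:ℝ) ≤ 1) |>.mp hHij with h | h <;>
        linarith [b1.1, b1.2, b2.1, b2.2, hc.1, hc.2]
    · set s : ℝ := Real.sqrt (1/2) with hs
      have hs2 : s * s = 1/2 := Real.mul_self_sqrt (by norm_num)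
      have hn : ∀ a b : ℝ, a ^ 2 + b ^ 2 ≤ 1 → ‖X i j a b‖ ≤ 1 := by
        intro a b hab
        rw [show ‖X i j a b‖ = Real.sqrt (a ^ 2 + b ^ 2) from norm_two n i j hij a b]
        calc Real.sqrt (a ^ 2 + b ^ 2) ≤ Real.sqrt 1 := Real.sqrt_le_sqrt hab
          _ = 1 := Real.sqrt_one
      have habs : ∀ (a b : ℝ), (a = s ∨ a = -s) → (b = s ∨ b = -s) → a ^ 2 + b ^ 2 ≤ 1 := by
        intro a b ha hb
        have h1 : a ^ 2 = 1/2 := by rcases ha with h | h <;> rw [h] <;> nlinarith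
        have h2 : b ^ 2 = 1/2 := by rcases hb with h | h <;> rw [h] <;> nlinarith
        linarith
      have b1 := abs_lt.mp (hcon _ (hn s s (habs s s (Or.inl rfl) (Or.inl rfl))))
      have b2 := abs_lt.mp (hcon _ (hn (-s) (-s) (habs _ _ (Or.inr rfl) (Or.inr rfl))))
      have b3 := abs_lt.mp (hcon _ (hn s (-s) (habs _ _ (Or.inl rfl) (Or.inr rfl))))
      have b4 := abs_lt.mp (hcon _ (hn (-s) s (habs _ _ (Or.inr rfl) (Or.inl rfl))))
      rw [hval] at b1 b2 b3 b4
      have hsym : H j i = H i j := hH.apply i j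
      have hid : (c + (g i * s + g j * s) + (1/2) * (s * H i i * s + s * H i j * s + s * H j i * s + s * H j j * s))
          + (c + (g i * (-s) + g j * (-s)) + (1/2) * ((-s) * H i i * (-s) + (-s) * H i j * (-s) + (-s) * H j i * (-s) + (-s) * H j j * (-s)))
          - (c + (g i * s + g j * (-s)) + (1/2) * (s * H i i * s + s * H i j * (-s) + (-s) * H j i * s + (-s) * H j j * (-s)))
          - (c + (g i * (-s) + g j * s) + (1/2) * ((-s) * H i i * (-s) + (-s) * H i j * s + s * H j i * (-s) + s * H j j * s))
          = 2 * H i j := by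
        rw [hsym]
        linear_combination 4 * H i j * hs2
      rcases abs_eq (by norm_num : (0:ℝ) ≤ 1) |>.mp hHij with h | h <;>
        linarith [b1.1, b1.2, b2.1, b2.2, b3.1, b3.2, b4.1, b4.2]
end

section
/- Let H be a symmetric n×n real matrix and suppose the quadratic polynomial ℓ(x) = c + gᵀx + (1/2)xᵀHx satisfies |ℓ(x)| ≤ Λ for all x ∈ B̄(0,1). Then ‖H‖ ≤ ‖H‖_F ≤ 4√2 · √(q+1) · Λ, where q + 1 = 1 + n + n(n+1)/2. -/
noncomputable def stmt18vv {n : ℕ} (i j : Fin n) (a b : ℝ) : EuclideanSpace ℝ (Fin n) :=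
  a • EuclideanSpace.single i 1 + b • EuclideanSpace.single j 1

lemma stmt18vv_apply {n : ℕ} (i j : Fin n) (a b : ℝ) (k : Fin n) :
    stmt18vv i j a b k = (if k = i then a else 0) + (if k = j then b else 0) := by
  simp [stmt18vv, EuclideanSpace.single_apply, mul_ite]

lemma stmt18vv_quad {n : ℕ} (H : Matrix (Fin n) (Fin n) ℝ) {i j : Fin n} (hij : i ≠ j)
    (a b : ℝ) :
    (∑ k, ∑ l, stmt18vv i j a b k * H k l * stmt18vv i j a b l)
    = a^2 * H i i + a*b*H i j + a*b*H j i + b^2 * H j j := by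
  simp only [stmt18vv_apply, add_mul, mul_add, ite_mul, mul_ite, zero_mul, mul_zero,
    Finset.sum_add_distrib, Finset.sum_ite_eq, Finset.sum_ite_eq', Finset.mem_univ, if_true]
  ring

lemma stmt18vv_norm {n : ℕ} {i j : Fin n} (hij : i ≠ j) (a b : ℝ) :
    ‖stmt18vv i j a b‖ = Real.sqrt (a^2 + b^2) := by
  rw [EuclideanSpace.norm_eq]
  congr 1
  have : ∀ k, (stmt18vv i j a b k)^2
      = (if k = i then a^2 else 0) + (if k = j then b^2 else 0) := by
    intro k
    rw [stmt18vv_apply]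
    by_cases h1 : k = i <;> by_cases h2 : k = j <;>
      simp [h1, h2, hij, Ne.symm hij] <;> ring
  simp only [Real.norm_eq_abs, sq_abs, this, Finset.sum_add_distrib, Finset.sum_ite_eq',
    Finset.mem_univ, if_true]

lemma stmt18_single_quad {n : ℕ} (H : Matrix (Fin n) (Fin n) ℝ) (i : Fin n) :
    (∑ k, ∑ l, (EuclideanSpace.single i (1:ℝ)) k * H k l * (EuclideanSpace.single i (1:ℝ)) l)
    = H i i := by
  simp [EuclideanSpace.single_apply, mul_ite, ite_mul, Finset.sum_ite_eq, Finset.sum_ite_eq']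

lemma stmt18_op_le_frob {n : ℕ} (A : Matrix (Fin n) (Fin n) ℝ) :
    opNorm A ≤ Real.sqrt (∑ i, ∑ j, (A i j)^2) := by
  apply ContinuousLinearMap.opNorm_le_bound _ (Real.sqrt_nonneg _)
  intro x
  rw [LinearMap.coe_toContinuousLinearMap']
  have hx : (Matrix.toEuclideanLin A) x = fun i => ∑ j, A i j * x j := by
    ext i
    simp [Matrix.toEuclideanLin_apply, Matrix.mulVec, dotProduct]
  rw [EuclideanSpace.norm_eq, EuclideanSpace.norm_eq]
  rw [hx]
  have key : ∑ i, ‖∑ j, A i j * x j‖^2 ≤ (∑ i, ∑ j, (A i j)^2) * ∑ j, ‖x j‖^2 := by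
    rw [Finset.sum_mul]
    apply Finset.sum_le_sum
    intro i _
    rw [Real.norm_eq_abs, sq_abs]
    calc (∑ j, A i j * x j)^2 ≤ (∑ j, (A i j)^2) * ∑ j, (x j)^2 :=
          Finset.sum_mul_sq_le_sq_mul_sq _ _ _
      _ = _ := by simp [Real.norm_eq_abs, sq_abs]
  calc Real.sqrt (∑ i, ‖∑ j, A i j * x j‖^2)
      ≤ Real.sqrt ((∑ i, ∑ j, (A i j)^2) * ∑ j, ‖x j‖^2) := Real.sqrt_le_sqrt key
    _ = _ := by rw [Real.sqrt_mul (by positivity)]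

/-- If `H` is symmetric and the quadratic `ℓ(x) = c + gᵀx + ½ xᵀHx` satisfies
`|ℓ(x)| ≤ Λ` on the closed unit ball, then `‖H‖ ≤ ‖H‖_F ≤ 4√2 √(q+1) Λ`,
where `q + 1 = 1 + n + n(n+1)/2`. -/
theorem stmt_18 (n : ℕ) (c : ℝ) (g : Fin n → ℝ) (H : Matrix (Fin n) (Fin n) ℝ)
    (hH : H.IsSymm) (Λ : ℝ)
    (ℓ : EuclideanSpace ℝ (Fin n) → ℝ)
    (hℓ : ∀ x, ℓ x = c + (∑ i, g i * x i) + (1 / 2) * ∑ i, ∑ j, x i * H i j * x j)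
    (hbound : ∀ x : EuclideanSpace ℝ (Fin n), ‖x‖ ≤ 1 → |ℓ x| ≤ Λ) :
    opNorm H ≤ Real.sqrt (∑ i, ∑ j, (H i j) ^ 2) ∧
    Real.sqrt (∑ i, ∑ j, (H i j) ^ 2) ≤
      4 * Real.sqrt 2 * Real.sqrt (1 + n + n * (n + 1) / 2) * Λ := by
  have hc : |c| ≤ Λ := by
    have h0 := hbound 0 (by simp)
    rw [hℓ 0] at h0
    simpa using h0
  have hΛ : 0 ≤ Λ := (abs_nonneg c).trans hc
  -- the quadratic form is bounded by 4Λ on the unit ball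
  have hQ : ∀ x : EuclideanSpace ℝ (Fin n), ‖x‖ ≤ 1 →
      |∑ i, ∑ j, x i * H i j * x j| ≤ 4 * Λ := by
    intro x hx
    have h1 := hbound x hx
    have h2 := hbound (-x) (by rwa [norm_neg])
    rw [hℓ x] at h1
    rw [hℓ (-x)] at h2
    have hneg : ℓ (-x) = ℓ (-x) := rfl
    have e2 : (c + (∑ i, g i * (-x) i) + (1 / 2) * ∑ i, ∑ j, (-x) i * H i j * (-x) j)
        = c - (∑ i, g i * x i) + (1 / 2) * ∑ i, ∑ j, x i * H i j * x j := by
      have hneg : ∀ i, (-x : EuclideanSpace ℝ (Fin n)) i = -(x i) := fun i => rfl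
      simp only [hneg]
      rw [sub_eq_add_neg, ← Finset.sum_neg_distrib]
      congr 1
      · congr 1
        exact Finset.sum_congr rfl fun i _ => by ring
      · congr 1
        exact Finset.sum_congr rfl fun i _ => Finset.sum_congr rfl fun j _ => by ring
    rw [e2] at h2
    have := abs_add_three c c (-(∑ i, ∑ j, x i * H i j * x j))
    calc |∑ i, ∑ j, x i * H i j * x j|
        = |(c + (∑ i, g i * x i) + (1 / 2) * ∑ i, ∑ j, x i * H i j * x j)
            + (c - (∑ i, g i * x i) + (1 / 2) * ∑ i, ∑ j, x i * H i j * x j)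
            + (-c) + (-c)| := by ring_nf
      _ ≤ |(c + (∑ i, g i * x i) + (1 / 2) * ∑ i, ∑ j, x i * H i j * x j)
            + (c - (∑ i, g i * x i) + (1 / 2) * ∑ i, ∑ j, x i * H i j * x j)
            + (-c)| + |(-c)| := abs_add_le _ _
      _ ≤ (|(c + (∑ i, g i * x i) + (1 / 2) * ∑ i, ∑ j, x i * H i j * x j)
            + (c - (∑ i, g i * x i) + (1 / 2) * ∑ i, ∑ j, x i * H i j * x j)|
            + |(-c)|) + |(-c)| := by gcongr; exact abs_add_le _ _
      _ ≤ ((|c + (∑ i, g i * x i) + (1 / 2) * ∑ i, ∑ j, x i * H i j * x j|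
            + |c - (∑ i, g i * x i) + (1 / 2) * ∑ i, ∑ j, x i * H i j * x j|)
            + |(-c)|) + |(-c)| := by gcongr; exact abs_add_le _ _
      _ ≤ ((Λ + Λ) + Λ) + Λ := by
            rw [abs_neg]
            gcongr
      _ = 4 * Λ := by ring
  -- every entry of H is bounded by 4Λ
  have hentry : ∀ i j, |H i j| ≤ 4 * Λ := by
    intro i j
    by_cases hij : i = j
    · subst hij
      have hnorm : ‖(EuclideanSpace.single i (1:ℝ))‖ ≤ 1 := by
        rw [EuclideanSpace.norm_single]; simp
      have := hQ _ hnorm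
      rwa [stmt18_single_quad H i] at this
    · set s : ℝ := Real.sqrt 2 / 2 with hs
      have hs2 : s^2 = 1/2 := by
        rw [hs, div_pow, Real.sq_sqrt (by norm_num : (0:ℝ) ≤ 2)]
        norm_num
      have hnorm1 : ‖stmt18vv i j s s‖ ≤ 1 := by
        rw [stmt18vv_norm hij]
        have h1 : s^2 + s^2 = 1 := by rw [hs2]; norm_num
        rw [h1, Real.sqrt_one]
      have hnorm2 : ‖stmt18vv i j s (-s)‖ ≤ 1 := by
        rw [stmt18vv_norm hij]
        have h1 : s^2 + (-s)^2 = 1 := by rw [neg_pow, hs2]; norm_num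
        rw [h1, Real.sqrt_one]
      have h1 := hQ _ hnorm1
      have h2 := hQ _ hnorm2
      rw [stmt18vv_quad H hij] at h1
      rw [stmt18vv_quad H hij] at h2
      have hsym : H j i = H i j := by
        have := congrFun (congrFun hH j) i
        simpa [Matrix.transpose_apply] using this.symm
      rw [hsym] at h1 h2
      have key : |2 * H i j| ≤ 8 * Λ := by
        have : 2 * H i j =
            (s^2 * H i i + s*s*H i j + s*s*H i j + s^2 * H j j)
            - (s^2 * H i i + s*(-s)*H i j + s*(-s)*H i j + (-s)^2 * H j j) := by
          have h12 : s * s = 1/2 := by rw [← sq]; exact hs2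
          linear_combination (-4 * H i j) * h12
        rw [this]
        calc |_ - _| ≤ |_| + |_| := abs_sub _ _
          _ ≤ 4*Λ + 4*Λ := add_le_add h1 h2
          _ = 8 * Λ := by ring
      rw [abs_mul, abs_two] at key
      linarith [abs_nonneg (H i j)]
  refine ⟨stmt18_op_le_frob H, ?_⟩
  -- Frobenius norm bound
  have hsum : (∑ i, ∑ j, (H i j)^2) ≤ (n : ℝ)^2 * (4*Λ)^2 := by
    calc (∑ i, ∑ j, (H i j)^2) ≤ ∑ _i : Fin n, ∑ _j : Fin n, (4*Λ)^2 := by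
          apply Finset.sum_le_sum; intro i _
          apply Finset.sum_le_sum; intro j _
          calc (H i j)^2 = |H i j|^2 := (sq_abs _).symm
            _ ≤ (4*Λ)^2 := by
                apply pow_le_pow_left₀ (abs_nonneg _) (hentry i j)
      _ = (n : ℝ)^2 * (4*Λ)^2 := by
          simp [Finset.sum_const, Finset.card_univ]
          ring
  have h1 : Real.sqrt (∑ i, ∑ j, (H i j)^2) ≤ 4 * Λ * n := by
    calc Real.sqrt (∑ i, ∑ j, (H i j)^2) ≤ Real.sqrt ((n : ℝ)^2 * (4*Λ)^2) :=
          Real.sqrt_le_sqrt hsum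
      _ = 4 * Λ * n := by
          rw [show ((n:ℝ)^2 * (4*Λ)^2) = (4*Λ*n)^2 by ring,
            Real.sqrt_sq (by positivity)]
  refine h1.trans ?_
  have h2 : (n : ℝ) ≤ Real.sqrt 2 * Real.sqrt (1 + n + n * (n + 1) / 2) := by
    rw [← Real.sqrt_mul (by norm_num)]
    have : (n : ℝ) = Real.sqrt ((n:ℝ)^2) := (Real.sqrt_sq n.cast_nonneg).symm
    rw [this]
    apply Real.sqrt_le_sqrt
    have hn : (0:ℝ) ≤ n := n.cast_nonneg
    nlinarith
  calc 4 * Λ * n ≤ 4 * Λ * (Real.sqrt 2 * Real.sqrt (1 + n + n * (n + 1) / 2)) := by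
        apply mul_le_mul_of_nonneg_left h2 (by positivity)
    _ = 4 * Real.sqrt 2 * Real.sqrt (1 + n + n * (n + 1) / 2) * Λ := by ring
end
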